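/- Let a_1, ..., a_n be nonzero integers. The field ℚ(√a_1, ..., √a_n) has degree 2^n over ℚ if and only if a_1, ..., a_n are multiplicatively independent modulo squares, i.e., no product ∏_{j∈J} a_j over a nonempty subset J ⊆ {1,...,n} is a perfect square. -/

import Mathlib

open IntermediateField Polynomial Finset

set_option maxHeartbeats 1000000
set_option synthInstance.maxHeartbeats 100000

/-- A rational square that is an integer is an integer square. -/
lemma aux_int_sq (z : ℤ) (q : ℚ) (h : (q:ℚ)^2 = (z:ℚ)) : ∃ s : ℤ, z = s^2 := by
  have hint : IsIntegral ℤ q := by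
    refine ⟨X^2 - C z, by monicity!, ?_⟩
    have : (aeval q) (X^2 - C z : ℤ[X]) = 0 := by simp [h]
    simpa [aeval_def] using this
  obtain ⟨s, hs⟩ := IsIntegrallyClosed.isIntegral_iff.mp hint
  rw [eq_intCast] at hs
  refine ⟨s, ?_⟩
  rw [← hs] at h
  exact_mod_cast h.symm

/-- restrictScalars preserves the ℚ-module structure (up to linear equiv). -/
noncomputable def auxRestrictEquiv (F : IntermediateField ℚ ℂ) (E : IntermediateField F ℂ) :
    (restrictScalars ℚ E) ≃ₗ[ℚ] E where
  toFun x := ⟨x.1, x.2⟩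
  invFun x := ⟨x.1, x.2⟩
  map_add' _ _ := rfl
  map_smul' _ _ := rfl
  left_inv _ := rfl
  right_inv _ := rfl

lemma aux_finrank_restrict (F : IntermediateField ℚ ℂ) (E : IntermediateField F ℂ) :
    Module.finrank ℚ (restrictScalars ℚ E) =
      Module.finrank ℚ F * Module.finrank F E :=
  ((auxRestrictEquiv F E).finrank_eq).trans (Module.finrank_mul_finrank ℚ F _).symm

lemma aux_isIntegral (F : IntermediateField ℚ ℂ) (c : ℚ) (x : ℂ) (hx : x^2 = (c:ℂ)) :
    IsIntegral F x := by
  refine ⟨X^2 - C (algebraMap ℚ F c), by monicity!, ?_⟩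
  have halg : algebraMap F ℂ (algebraMap ℚ F c) = (c : ℂ) := by
    rw [← IsScalarTower.algebraMap_apply]
    simp
  simp [eval₂_sub, hx, halg]

lemma aux_cast (z : ℤ) (x : ℂ) (h : x ^ 2 = (z : ℂ)) : x ^ 2 = (((z : ℚ)) : ℂ) := by
  push_cast; exact h

lemma aux_bound (n : ℕ) (a : Fin n → ℤ) (r : Fin n → ℂ)
    (hr : ∀ i, r i ^ 2 = (a i : ℂ)) (S : Finset (Fin n)) :
    Module.finrank ℚ (adjoin ℚ (r '' ↑S)) ≤ 2 ^ S.card := by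
  classical
  induction S using Finset.induction_on with
  | empty =>
    have : (r '' ↑(∅ : Finset (Fin n))) = (∅ : Set ℂ) := by simp
    rw [this, IntermediateField.adjoin_empty, IntermediateField.finrank_bot]
    simp
  | insert _ _ hiS =>
    rename_i i S ih
    have h1 : (r '' ↑(insert i S)) = (r '' ↑S) ∪ {r i} := by
      rw [Finset.coe_insert, Set.image_insert_eq, Set.insert_eq, Set.union_comm]
    set F := adjoin ℚ (r '' ↑S) with hF
    have hint : IsIntegral F (r i) := aux_isIntegral F (a i) (r i) (aux_cast _ _ (hr i))
    have h2 : adjoin ℚ (r '' ↑(insert i S)) = restrictScalars ℚ (adjoin F {r i}) := by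
      rw [h1, ← adjoin_adjoin_left]; rfl
    have h3 : Module.finrank F (adjoin F {r i}) ≤ 2 := by
      have := IntermediateField.adjoin.finrank hint
      rw [this]
      have hdvd := minpoly.dvd F (r i)
        (p := X ^ 2 - C (algebraMap ℚ F ((a i : ℚ))))
        (by
          have halg : algebraMap F ℂ (algebraMap ℚ F ((a i : ℚ))) = ((a i : ℚ) : ℂ) := by
            rw [← IsScalarTower.algebraMap_apply]; simp
          rw [map_sub, map_pow, aeval_X, aeval_C, halg, aux_cast _ _ (hr i), sub_self])
      calc (minpoly F (r i)).natDegree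
          ≤ (X ^ 2 - C (algebraMap ℚ F ((a i : ℚ)))).natDegree :=
            Polynomial.natDegree_le_of_dvd hdvd (X_pow_sub_C_ne_zero two_pos _)
        _ = 2 := natDegree_X_pow_sub_C
    calc Module.finrank ℚ (adjoin ℚ (r '' ↑(insert i S)))
        = Module.finrank ℚ F * Module.finrank F (adjoin F {r i}) := by
          rw [h2, aux_finrank_restrict]
      _ ≤ 2 ^ S.card * 2 := Nat.mul_le_mul ih h3
      _ ≤ 2 ^ (insert i S).card := by
          rw [Finset.card_insert_of_notMem hiS, pow_succ]

lemma aux_main (n : ℕ) : ∀ (a : Fin n → ℤ), (∀ i, a i ≠ 0) → ∀ (r : Fin n → ℂ),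
    (∀ i, r i ^ 2 = (a i : ℂ)) →
    (∀ J : Finset (Fin n), J.Nonempty → ¬∃ s : ℤ, ∏ j ∈ J, a j = s ^ 2) →
    Module.finrank ℚ (adjoin ℚ (Set.range r)) = 2 ^ n ∧
    ∀ t : ℂ, t ∈ adjoin ℚ (Set.range r) → (∃ c : ℚ, t ^ 2 = (c : ℂ)) →
      ∃ (J : Finset (Fin n)) (q : ℚ), t = (q : ℂ) * ∏ j ∈ J, r j := by
  induction n with
  | zero =>
    intro a ha r hr hind
    have h0 : Set.range r = ∅ := Set.range_eq_empty r
    rw [h0, IntermediateField.adjoin_empty]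
    refine ⟨by simp [IntermediateField.finrank_bot], ?_⟩
    intro t ht _
    rw [IntermediateField.mem_bot] at ht
    obtain ⟨q, hq⟩ := ht
    refine ⟨∅, q, ?_⟩
    rw [Finset.prod_empty, mul_one, ← hq]
    exact (eq_ratCast (algebraMap ℚ ℂ) q).symm
  | succ n IH =>
    intro a ha r hr hind
    set a' : Fin n → ℤ := fun j => a j.castSucc with ha'def
    set r' : Fin n → ℂ := fun j => r j.castSucc with hr'def
    let emb : Fin n ↪ Fin (n+1) := ⟨Fin.castSucc, Fin.castSucc_injective n⟩
    have hind' : ∀ J : Finset (Fin n), J.Nonempty → ¬∃ s : ℤ, ∏ j ∈ J, a' j = s ^ 2 := by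
      rintro J hJ ⟨s, hs⟩
      refine hind (J.map emb) (Finset.Nonempty.map hJ) ⟨s, ?_⟩
      rw [Finset.prod_map]
      exact hs
    obtain ⟨hFrank, hFsq⟩ := IH a' (fun j => ha _) r' (fun j => hr _) hind'
    set F := adjoin ℚ (Set.range r') with hFdef
    set i := Fin.last n with hidef
    set ℓ := r i with hldef
    have hrl : ℓ ^ 2 = ((a i : ℤ) : ℂ) := hr i
    have hiJ : ∀ J : Finset (Fin n), i ∉ J.map emb := by
      intro J hmem
      rw [Finset.mem_map] at hmem
      obtain ⟨j, _, hj⟩ := hmem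
      exact (Fin.castSucc_lt_last j).ne hj
    have hconvQ : ∀ J : Finset (Fin n), (∏ j ∈ J, ((a (emb j) : ℤ) : ℚ)) = ∏ j ∈ J, ((a' j : ℤ) : ℚ) := fun _ => rfl
    have hconvC : ∀ J : Finset (Fin n), (∏ j ∈ J, r (emb j)) = ∏ j ∈ J, r' j := fun _ => rfl
    -- ℓ is not in F
    have hlnot : ℓ ∉ F := by
      intro hmem
      obtain ⟨J, q, heq⟩ := hFsq ℓ hmem ⟨(a i : ℚ), aux_cast _ _ hrl⟩
      have hsq : ((a i : ℚ) : ℂ) = ((q ^ 2 * ∏ j ∈ J, (a' j : ℚ) : ℚ) : ℂ) := by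
        push_cast
        rw [← hrl, heq, mul_pow, ← Finset.prod_pow]
        congr 1
        exact Finset.prod_congr rfl fun j _ => hr _
      have hq : (a i : ℚ) = q ^ 2 * ∏ j ∈ J, (a' j : ℚ) := by exact_mod_cast hsq
      have key : (((∏ j ∈ insert i (J.map emb), a j : ℤ)) : ℚ) =
          (q * ∏ j ∈ J, (a' j : ℚ)) ^ 2 := by
        rw [Finset.prod_insert (hiJ J), Finset.prod_map]
        push_cast
        rw [hconvQ J, hq]
        ring
      obtain ⟨s, hs⟩ := aux_int_sq _ _ key.symm
      exact hind (insert i (J.map emb)) ⟨i, Finset.mem_insert_self _ _⟩ ⟨s, hs⟩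
    -- minimal polynomial of ℓ over F
    set c : F := algebraMap ℚ F ((a i : ℚ)) with hcdef
    have halg : algebraMap F ℂ c = ((a i : ℚ) : ℂ) := by
      rw [hcdef, ← IsScalarTower.algebraMap_apply]; simp
    have hroot : ∀ b : F, b ^ 2 ≠ c := by
      intro b hb
      have hsq : (algebraMap F ℂ b) * (algebraMap F ℂ b) = ℓ * ℓ := by
        rw [← pow_two, ← pow_two, ← map_pow, hb, halg, hrl]
        push_cast
        rfl
      rcases mul_self_eq_mul_self_iff.mp hsq with h | h
      · exact hlnot (h ▸ b.2)
      · have h2 : ℓ = -(algebraMap F ℂ b) := by rw [h]; ring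
        exact hlnot (h2 ▸ neg_mem b.2)
    have hirr : Irreducible (X ^ 2 - C c) :=
      X_pow_sub_C_irreducible_of_prime Nat.prime_two hroot
    have heval : (aeval ℓ) (X ^ 2 - C c) = 0 := by
      rw [map_sub, map_pow, aeval_X, aeval_C, halg, aux_cast _ _ hrl, sub_self]
    have hint : IsIntegral F ℓ := aux_isIntegral F ((a i : ℚ)) ℓ (aux_cast _ _ hrl)
    have hmin : minpoly F ℓ = X ^ 2 - C c :=
      (minpoly.eq_of_irreducible_of_monic hirr heval (by monicity!)).symm
    have hdeg2 : Module.finrank F F⟮ℓ⟯ = 2 := by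
      rw [IntermediateField.adjoin.finrank hint, hmin, natDegree_X_pow_sub_C]
    -- range decomposition
    have hrange : Set.range r = Set.range r' ∪ {ℓ} := by
      ext z
      constructor
      · rintro ⟨k, rfl⟩
        rcases Fin.eq_castSucc_or_eq_last k with ⟨j, rfl⟩ | rfl
        · exact Or.inl ⟨j, rfl⟩
        · exact Or.inr rfl
      · rintro (⟨j, rfl⟩ | rfl)
        · exact ⟨j.castSucc, rfl⟩
        · exact ⟨i, rfl⟩
    have hadj : adjoin ℚ (Set.range r) = restrictScalars ℚ (adjoin F {ℓ}) := by
      rw [hrange, ← adjoin_adjoin_left]; rfl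
    have hrank : Module.finrank ℚ (adjoin ℚ (Set.range r)) = 2 ^ (n + 1) := by
      rw [hadj, aux_finrank_restrict, hFrank, hdeg2, pow_succ]
    refine ⟨hrank, ?_⟩
    rintro t ht ⟨cc, hcc⟩
    have htE : t ∈ adjoin F {ℓ} := by rw [hadj] at ht; exact ht
    set pb := IntermediateField.adjoin.powerBasis hint with hpbdef
    obtain ⟨f, hfdeg, hfeq⟩ := pb.exists_eq_aeval ⟨t, htE⟩
    have hf1 : f.natDegree ≤ 1 := by
      have : pb.dim = 2 := by rw [hpbdef, IntermediateField.adjoin.powerBasis_dim, hmin,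
        natDegree_X_pow_sub_C]
      omega
    set x : ℂ := algebraMap F ℂ (f.coeff 0) with hxdef
    set y : ℂ := algebraMap F ℂ (f.coeff 1) with hydef
    have hxF : x ∈ F := (f.coeff 0).2
    have hyF : y ∈ F := (f.coeff 1).2
    have ht_eq : t = y * ℓ + x := by
      have h5 : t = algebraMap F⟮ℓ⟯ ℂ (aeval pb.gen f) := by rw [← hfeq]; rfl
      have hgen : (IsScalarTower.toAlgHom F F⟮ℓ⟯ ℂ) pb.gen = ℓ := by
        rw [hpbdef, IntermediateField.adjoin.powerBasis_gen]
        exact IntermediateField.AdjoinSimple.algebraMap_gen F ℓ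
      have h6 : (algebraMap (F⟮ℓ⟯) ℂ) ((aeval pb.gen) f) = (aeval ℓ) f := by
        have h7 := Polynomial.aeval_algHom_apply (IsScalarTower.toAlgHom F F⟮ℓ⟯ ℂ) pb.gen f
        rw [hgen] at h7
        simp only [IsScalarTower.coe_toAlgHom'] at h7
        exact h7.symm
      rw [h5, h6]
      conv_lhs => rw [Polynomial.eq_X_add_C_of_natDegree_le_one hf1]
      rw [map_add, map_mul, aeval_C, aeval_X, aeval_C]
    by_cases hxy : x * y = 0
    · rcases mul_eq_zero.mp hxy with hx0 | hy0
      · -- x = 0 : t = y * ℓ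
        have hty : t = y * ℓ := by rw [ht_eq, hx0, add_zero]
        have hane : ((a i : ℤ) : ℂ) ≠ 0 := Int.cast_ne_zero.mpr (ha i)
        have hy2 : y ^ 2 = ((cc / (a i : ℚ) : ℚ) : ℂ) := by
          have h6 : y ^ 2 * ((a i : ℤ) : ℂ) = (cc : ℂ) := by
            rw [← hcc, hty, mul_pow, hrl]
          push_cast
          rw [eq_div_iff (by exact_mod_cast hane)]
          exact_mod_cast h6
        obtain ⟨J, q, hq⟩ := hFsq y hyF ⟨cc / (a i : ℚ), hy2⟩
        refine ⟨insert i (J.map emb), q, ?_⟩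
        rw [Finset.prod_insert (hiJ J), Finset.prod_map, hconvC J, hty, hq]
        ring
      · -- y = 0 : t = x ∈ F
        have htF : t ∈ F := by
          rw [ht_eq, hy0, zero_mul, zero_add]; exact hxF
        obtain ⟨J, q, hq⟩ := hFsq t htF ⟨cc, hcc⟩
        refine ⟨J.map emb, q, ?_⟩
        rw [hq, Finset.prod_map]
        rfl
    · -- x * y ≠ 0 : contradiction
      exfalso
      apply hlnot
      have hsq : (2 * x * y) * ℓ = (cc : ℂ) - x ^ 2 - y ^ 2 * ((a i : ℤ) : ℂ) := by
        rw [← hcc, ht_eq, ← hrl]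
        ring
      have h8 : ℓ = ((cc : ℂ) - x ^ 2 - y ^ 2 * ((a i : ℤ) : ℂ)) / (2 * x * y) := by
        rw [eq_div_iff (by simpa [mul_assoc] using mul_ne_zero two_ne_zero hxy), mul_comm]
        exact hsq
      rw [h8]
      have hccF : (cc : ℂ) ∈ F := by
        rw [← eq_ratCast (algebraMap ℚ ℂ) cc]
        exact F.algebraMap_mem cc
      have haF : ((a i : ℤ) : ℂ) ∈ F := F.intCast_mem _
      have h2F : (2 : ℂ) ∈ F := by
        rw [show (2:ℂ) = ((2:ℚ):ℂ) by norm_num, ← eq_ratCast (algebraMap ℚ ℂ) 2]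
        exact F.algebraMap_mem 2
      exact div_mem (sub_mem (sub_mem hccF (pow_mem hxF 2)) (mul_mem (pow_mem hyF 2) haF))
        (mul_mem (mul_mem h2F hxF) hyF)

theorem stmt_6 (n : ℕ) (a : Fin n → ℤ) (ha : ∀ i, a i ≠ 0)
    (r : Fin n → ℂ) (hr : ∀ i, r i ^ 2 = (a i : ℂ)) :
    Module.finrank ℚ (IntermediateField.adjoin ℚ (Set.range r)) = 2 ^ n ↔
      ∀ J : Finset (Fin n), J.Nonempty → ¬∃ s : ℤ, ∏ j ∈ J, a j = s ^ 2 := by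
  constructor
  · intro hrank J hJ
    rintro ⟨s, hs⟩
    obtain ⟨i, hi⟩ := hJ
    have hrne : ∀ j, r j ≠ 0 := by
      intro j h0
      apply ha j
      have h1 : ((a j : ℤ) : ℂ) = 0 := by rw [← hr j, h0]; norm_num
      exact_mod_cast h1
    set K := adjoin ℚ (r '' ↑(Finset.univ.erase i)) with hKdef
    have hmemK : ∀ j : Fin n, j ≠ i → r j ∈ K := by
      intro j hj
      exact subset_adjoin _ _ ⟨j, by simp [hj], rfl⟩
    have hprodK : (∏ j ∈ J.erase i, r j) ∈ K :=
      prod_mem fun j hj => hmemK j (Finset.mem_erase.mp hj).1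
    have hprodne : (∏ j ∈ J.erase i, r j) ≠ 0 :=
      Finset.prod_ne_zero_iff.mpr fun j _ => hrne j
    have hZ : a i * ∏ j ∈ J.erase i, a j = s ^ 2 := by
      rw [Finset.mul_prod_erase J a hi]; exact hs
    have hsq : (r i * ∏ j ∈ J.erase i, r j) * (r i * ∏ j ∈ J.erase i, r j)
        = ((s : ℂ)) * ((s : ℂ)) := by
      rw [← pow_two, ← pow_two, mul_pow, ← Finset.prod_pow, hr i,
        Finset.prod_congr rfl fun j _ => hr j]
      exact_mod_cast hZ
    have hcases := mul_self_eq_mul_self_iff.mp hsq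
    have hriK : r i ∈ K := by
      have hsK : ((s : ℂ)) ∈ K := K.intCast_mem s
      have hnsK : (-(s : ℂ)) ∈ K := neg_mem hsK
      rcases hcases with h | h
      · have : r i = (s : ℂ) / (∏ j ∈ J.erase i, r j) := by
          rw [eq_div_iff hprodne]; exact h
        rw [this]; exact div_mem hsK hprodK
      · have : r i = (-(s : ℂ)) / (∏ j ∈ J.erase i, r j) := by
          rw [eq_div_iff hprodne]; exact h
        rw [this]; exact div_mem hnsK hprodK
    have hKeq : adjoin ℚ (Set.range r) = K := by
      apply le_antisymm
      · rw [IntermediateField.adjoin_le_iff]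
        rintro _ ⟨k, rfl⟩
        by_cases hk : k = i
        · rw [hk]; exact hriK
        · exact hmemK k hk
      · exact IntermediateField.adjoin.mono _ _ _ (by rintro _ ⟨j, _, rfl⟩; exact ⟨j, rfl⟩)
    rw [hKeq] at hrank
    have hb := aux_bound n a r hr (Finset.univ.erase i)
    rw [← hKdef, hrank, Finset.card_erase_of_mem (Finset.mem_univ i), Finset.card_univ,
      Fintype.card_fin] at hb
    have hn : 0 < n := i.pos
    have hlt : 2 ^ (n - 1) < 2 ^ n := Nat.pow_lt_pow_right (by norm_num) (Nat.sub_lt hn one_pos)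
    omega
  · intro hind
    exact (aux_main n a ha r hr hind).1
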